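/- Let N ≥ 1, M > 0, x, y ∈ ℝ^N with all components in [0, M], let 0 < δ < M, let F : K_x → K_y satisfy |d²(p,q) − d²(F(p), F(q))| ≤ 2δ for all p, q ∈ K_x, and let σ, τ : {1,…,N} → {1,…,N} satisfy F(□(n)) ⊆ □(σ(n)) and F(p_n^+(x)), F(p_n^−(x)) ∈ {p_{τ(n)}^+(y), p_{τ(n)}^−(y)} for all n. Then τ(n) ∈ {σ(n), σ(n) + 1} for every n ∈ {1,…,N}. -/
import Mathlib


noncomputable def box (M : ℝ) (n : ℕ) : Set (ℝ × ℝ) :=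
  Set.Icc (4 * M + 10 * M * (n : ℝ)) (4 * M + 10 * M * (n : ℝ) + 2 * M) ×ˢ Set.Icc (-M) M

noncomputable def pp {N : ℕ} (M : ℝ) (z : Fin N → ℝ) (n : Fin N) : ℝ × ℝ :=
  (10 * M * ((n : ℕ) : ℝ), z n)

noncomputable def pm {N : ℕ} (M : ℝ) (z : Fin N → ℝ) (n : Fin N) : ℝ × ℝ :=
  (10 * M * ((n : ℕ) : ℝ), -(z n))

noncomputable def Kset {N : ℕ} (M : ℝ) (z : Fin N → ℝ) : Set (ℝ × ℝ) :=
  ⋃ n : Fin N, ({pp M z n, pm M z n} ∪ box M n)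

theorem pp_mem {N : ℕ} (M : ℝ) (z : Fin N → ℝ) (n : Fin N) : pp M z n ∈ Kset M z :=
  Set.mem_iUnion.mpr ⟨n, Or.inl (Set.mem_insert _ _)⟩

theorem pm_mem {N : ℕ} (M : ℝ) (z : Fin N → ℝ) (n : Fin N) : pm M z n ∈ Kset M z :=
  Set.mem_iUnion.mpr ⟨n, Or.inl (Set.mem_insert_of_mem _ rfl)⟩

theorem Kset_compact {N : ℕ} (M : ℝ) (z : Fin N → ℝ) : IsCompact (Kset M z) := by
  apply isCompact_iUnion
  intro n
  exact ((Set.toFinite _).isCompact).union (isCompact_Icc.prod isCompact_Icc)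

instance {N : ℕ} (M : ℝ) (z : Fin N → ℝ) : CompactSpace ↥(Kset M z) :=
  isCompact_iff_compactSpace.mp (Kset_compact M z)

theorem Kset_nonempty {N : ℕ} (hN : 0 < N) (M : ℝ) (z : Fin N → ℝ) : (Kset M z).Nonempty :=
  ⟨pp M z ⟨0, hN⟩, pp_mem M z ⟨0, hN⟩⟩

/-- Step 6: `τ(n) ∈ {σ(n), σ(n) + 1}` for every `n`. -/
theorem step6_tau_mem {N : ℕ} (hN : 0 < N) {M : ℝ} (hM : 0 < M)
    (x y : Fin N → ℝ) (hx : ∀ n, x n ∈ Set.Icc (0 : ℝ) M) (hy : ∀ n, y n ∈ Set.Icc (0 : ℝ) M)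
    {δ : ℝ} (hδ0 : 0 < δ) (hδM : δ < M)
    (F : ↥(Kset M x) → ↥(Kset M y))
    (hF : ∀ p q : ↥(Kset M x), |dist p q - dist (F p) (F q)| ≤ 2 * δ)
    (σ : Fin N → Fin N)
    (hσ : ∀ n : Fin N, ∀ p : ↥(Kset M x),
      (p : ℝ × ℝ) ∈ box M n → (F p : ℝ × ℝ) ∈ box M (σ n))
    (τ : Fin N → Fin N)
    (hτ : ∀ n : Fin N,
      (F ⟨pp M x n, pp_mem M x n⟩ : ℝ × ℝ) ∈ ({pp M y (τ n), pm M y (τ n)} : Set (ℝ × ℝ)) ∧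
      (F ⟨pm M x n, pm_mem M x n⟩ : ℝ × ℝ) ∈ ({pp M y (τ n), pm M y (τ n)} : Set (ℝ × ℝ))) :
    ∀ n : Fin N, (τ n : ℕ) = (σ n : ℕ) ∨ (τ n : ℕ) = (σ n : ℕ) + 1 := by
  intro n
  have hx0 := (hx n).1
  have hxM := (hx n).2
  set c : ℝ × ℝ := (4 * M + 10 * M * ((n : ℕ) : ℝ), 0) with hc_def
  have hc : c ∈ box M n := by
    refine Set.mem_prod.mpr ⟨⟨?_, ?_⟩, ?_, ?_⟩ <;> simp only [hc_def] <;> linarith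
  have hcK : c ∈ Kset M x := Set.mem_iUnion.mpr ⟨n, Or.inr hc⟩
  set P : ↥(Kset M x) := ⟨pp M x n, pp_mem M x n⟩ with hP
  set Q : ↥(Kset M x) := ⟨c, hcK⟩ with hQ
  have hdPQ : dist P Q = 4 * M := by
    have h0 : dist P Q = dist (pp M x n) c := rfl
    rw [h0, Prod.dist_eq]
    simp only [pp, hc_def]
    rw [Real.dist_eq, Real.dist_eq]
    have h1 : |10 * M * ((n : ℕ) : ℝ) - (4 * M + 10 * M * ((n : ℕ) : ℝ))| = 4 * M := by
      rw [show 10 * M * ((n : ℕ) : ℝ) - (4 * M + 10 * M * ((n : ℕ) : ℝ)) = -(4 * M) by ring,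
        abs_neg, abs_of_nonneg (by linarith)]
    have h2 : |x n - 0| = x n := by rw [sub_zero, abs_of_nonneg hx0]
    rw [h1, h2]
    exact max_eq_left (by linarith)
  set a : ℝ × ℝ := (F P : ℝ × ℝ) with ha_def
  set b : ℝ × ℝ := (F Q : ℝ × ℝ) with hb_def
  have ha1 : a.1 = 10 * M * ((τ n : ℕ) : ℝ) := by
    rcases (hτ n).1 with h | h
    · rw [ha_def, h]; rfl
    · rw [ha_def, h]; rfl
  have hb1 := (hσ n Q hc).1
  have hb1l : 4 * M + 10 * M * ((σ n : ℕ) : ℝ) ≤ b.1 := hb1.1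
  have hb1u : b.1 ≤ 4 * M + 10 * M * ((σ n : ℕ) : ℝ) + 2 * M := hb1.2
  have hdF : dist (F P) (F Q) ≤ 4 * M + 2 * δ := by
    have := hF P Q
    rw [hdPQ] at this
    have := abs_le.mp this
    linarith [this.1]
  have hfst : |a.1 - b.1| ≤ dist (F P) (F Q) := by
    have h0 : dist (F P) (F Q) = dist a b := rfl
    rw [h0, Prod.dist_eq]
    exact le_trans (le_of_eq (Real.dist_eq a.1 b.1).symm) (le_max_left _ _)
  have habs : |a.1 - b.1| ≤ 4 * M + 2 * δ := le_trans hfst hdF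
  have h6 : |a.1 - b.1| < 6 * M := lt_of_le_of_lt habs (by linarith)
  rw [ha1] at h6
  have h6' := abs_lt.mp h6
  have hlt1 : ((τ n : ℕ) : ℝ) < ((σ n : ℕ) : ℝ) + 2 := by nlinarith [h6'.2]
  have hlt2 : ((σ n : ℕ) : ℝ) < ((τ n : ℕ) : ℝ) + 1 := by nlinarith [h6'.1]
  have hn1 : (τ n : ℕ) < (σ n : ℕ) + 2 := by exact_mod_cast hlt1
  have hn2 : (σ n : ℕ) < (τ n : ℕ) + 1 := by exact_mod_cast hlt2
  omega
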